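/- There exists c > 0 such that for all ω ∈ (0, 1/8], ⟨φ_ω, Λ_ω⟩ := ∫_ℝ φ_ω(x) Λ_ω(x) dx ≥ c √ω. -/

import Mathlib

open Real MeasureTheory

/-- The solitary-wave profile of the cubic–quintic NLS. -/
noncomputable def phi (ω x : ℝ) : ℝ :=
  Real.sqrt (4 * ω / (1 + Real.sqrt (1 - 16 * ω / 3) * Real.cosh (2 * Real.sqrt ω * x)))

/-- Λ_ω = ω ∂φ_ω/∂ω. -/
noncomputable def Lam (ω x : ℝ) : ℝ := ω * deriv (fun s : ℝ => phi s x) ω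

open Set Filter Topology

noncomputable def aa (s : ℝ) : ℝ := Real.sqrt (1 - 16 * s / 3)

noncomputable def PP (s x : ℝ) : ℝ :=
  4 * s / (1 + aa s * Real.cosh (2 * Real.sqrt s * x))

noncomputable def kk (s : ℝ) : ℝ := 4 * Real.sqrt s / (Real.sqrt 3 * (1 + aa s))

noncomputable def DD' (s x : ℝ) : ℝ :=
  -8 / (3 * aa s) * Real.cosh (2 * Real.sqrt s * x) +
    aa s * (Real.sinh (2 * Real.sqrt s * x) * (x / Real.sqrt s))

noncomputable def PP' (s x : ℝ) : ℝ :=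
  (4 * (1 + aa s * Real.cosh (2 * Real.sqrt s * x)) - 4 * s * DD' s x) /
    (1 + aa s * Real.cosh (2 * Real.sqrt s * x)) ^ 2

lemma h163 {s : ℝ} (hs3 : s < 3 / 16) : 0 < 1 - 16 * s / 3 := by nlinarith

lemma aa_pos {s : ℝ} (hs3 : s < 3 / 16) : 0 < aa s := Real.sqrt_pos.2 (h163 hs3)

lemma aa_sq {s : ℝ} (hs3 : s < 3 / 16) : aa s ^ 2 = 1 - 16 * s / 3 := Real.sq_sqrt (h163 hs3).le

lemma aa_le_one {s : ℝ} (hs : 0 < s) : aa s ≤ 1 :=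
  Real.sqrt_le_one.2 (by nlinarith)

lemma D_pos {s : ℝ} (hs3 : s < 3 / 16) (x : ℝ) :
    0 < 1 + aa s * Real.cosh (2 * Real.sqrt s * x) := by
  have := Real.cosh_pos (x := 2 * Real.sqrt s * x)
  nlinarith [aa_pos hs3]

lemma kk_pos {s : ℝ} (hs : 0 < s) (hs3 : s < 3 / 16) : 0 < kk s := by
  have ha := aa_pos hs3
  apply div_pos (by positivity)
  positivity

lemma kk_rel {s : ℝ} (hs3 : s < 3 / 16) :
    Real.sqrt 3 * kk s * (1 + aa s) = 4 * Real.sqrt s := by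
  have ha := aa_pos hs3
  have h3 : (0:ℝ) < Real.sqrt 3 := by positivity
  rw [kk]
  field_simp

lemma kk_sq_rel {s : ℝ} (hs : 0 < s) (hs3 : s < 3 / 16) :
    kk s ^ 2 * (1 + aa s) = 1 - aa s := by
  have ha := aa_pos hs3
  have hrel := kk_rel (s := s) hs3
  have h3 : Real.sqrt 3 ^ 2 = 3 := Real.sq_sqrt (by norm_num)
  have hss : Real.sqrt s ^ 2 = s := Real.sq_sqrt hs.le
  have hsq : aa s ^ 2 = 1 - 16 * s / 3 := aa_sq hs3
  have h3' : (0:ℝ) < Real.sqrt 3 := by positivity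
  have hne : (1 : ℝ) + aa s ≠ 0 := by positivity
  rw [kk, div_pow]
  rw [div_mul_eq_mul_div, div_eq_iff (by positivity)]
  linear_combination (16 * (1 + aa s)) * hss - ((1 - aa s) * (1 + aa s) ^ 2) * h3 +
    (3 * (1 + aa s)) * hsq

lemma kk_lt_one {s : ℝ} (hs : 0 < s) (hs3 : s < 3 / 16) : kk s < 1 := by
  have ha := aa_pos hs3
  have hrel := kk_rel (s := s) hs3
  have h3 : Real.sqrt 3 ^ 2 = 3 := Real.sq_sqrt (by norm_num)
  have hss : Real.sqrt s ^ 2 = s := Real.sq_sqrt hs.le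
  have hsq : aa s ^ 2 = 1 - 16 * s / 3 := aa_sq hs3
  have hk : 0 < kk s := kk_pos hs hs3
  have h1 : kk s ^ 2 * (1 + aa s) = 1 - aa s := kk_sq_rel hs hs3
  nlinarith


lemma hasDerivAt_aa {s : ℝ} (hs3 : s < 3 / 16) :
    HasDerivAt aa (-8 / (3 * aa s)) s := by
  have h := h163 hs3
  have ha := aa_pos hs3
  have hinner : HasDerivAt (fun t : ℝ => 1 - 16 * t / 3) (-16 / 3) s := by
    simpa [neg_div] using (((hasDerivAt_id s).const_mul (16 : ℝ)).div_const 3).const_sub 1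
  have := (Real.hasDerivAt_sqrt h.ne').comp s hinner
  refine this.congr_deriv ?_; symm
  rw [aa]
  field_simp
  ring

lemma hasDerivAt_cosh_sqrt {s : ℝ} (hs : 0 < s) (x : ℝ) :
    HasDerivAt (fun t : ℝ => Real.cosh (2 * Real.sqrt t * x))
      (Real.sinh (2 * Real.sqrt s * x) * (x / Real.sqrt s)) s := by
  have hsq : (0:ℝ) < Real.sqrt s := Real.sqrt_pos.2 hs
  have hinner : HasDerivAt (fun t : ℝ => 2 * Real.sqrt t * x) (x / Real.sqrt s) s := by
    have := ((Real.hasDerivAt_sqrt hs.ne').const_mul (2 : ℝ)).mul_const x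
    refine this.congr_deriv ?_; symm
    field_simp
  exact (Real.hasDerivAt_cosh _).comp s hinner

lemma hasDerivAt_PP {s : ℝ} (hs : 0 < s) (hs3 : s < 3 / 16) (x : ℝ) :
    HasDerivAt (fun t : ℝ => PP t x) (PP' s x) s := by
  have hD := D_pos hs3 x
  have hnum : HasDerivAt (fun t : ℝ => 4 * t) (4 : ℝ) s := by
    simpa using (hasDerivAt_id s).const_mul (4 : ℝ)
  have hden : HasDerivAt (fun t : ℝ => 1 + aa t * Real.cosh (2 * Real.sqrt t * x))
      (DD' s x) s := by
    exact ((hasDerivAt_aa hs3).mul (hasDerivAt_cosh_sqrt hs x)).const_add 1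
  exact hnum.div hden hD.ne'

lemma phi_eq (s x : ℝ) : phi s x = Real.sqrt (PP s x) := rfl

lemma PP_pos {s : ℝ} (hs : 0 < s) (hs3 : s < 3 / 16) (x : ℝ) : 0 < PP s x :=
  div_pos (by linarith) (D_pos hs3 x)

lemma phi_mul_Lam {ω : ℝ} (hs : 0 < ω) (hs3 : ω < 3 / 16) (x : ℝ) :
    phi ω x * Lam ω x = ω / 2 * PP' ω x := by
  have hP := hasDerivAt_PP hs hs3 x
  have hpos := PP_pos hs hs3 x
  have hsq : (0:ℝ) < Real.sqrt (PP ω x) := Real.sqrt_pos.2 hpos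
  have hphi : HasDerivAt (fun t : ℝ => phi t x)
      (1 / (2 * Real.sqrt (PP ω x)) * PP' ω x) ω := by
    have := (Real.hasDerivAt_sqrt hpos.ne').comp ω hP
    exact this
  rw [Lam, hphi.deriv, phi_eq]
  have h2 : Real.sqrt (PP ω x) ≠ 0 := hsq.ne'
  field_simp

noncomputable def GG (s x : ℝ) : ℝ :=
  Real.sqrt 3 / 2 *
    (Real.log ((1 + kk s) + (1 - kk s) * Real.exp (-(2 * Real.sqrt s * x))) -
      Real.log ((1 - kk s) + (1 + kk s) * Real.exp (-(2 * Real.sqrt s * x))))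

lemma hasDerivAt_GG {s : ℝ} (hs : 0 < s) (hs3 : s < 3 / 16) (x : ℝ) :
    HasDerivAt (fun y : ℝ => GG s y) (PP s x) x := by
  have hk0 := kk_pos hs hs3
  have hk1 := kk_lt_one hs hs3
  have hk1' : 0 < 1 - kk s := by linarith
  have hk1'' : 0 < 1 + kk s := by linarith
  have ha := aa_pos hs3
  have hr : 0 < Real.sqrt s := Real.sqrt_pos.2 hs
  set k := kk s with hkdef
  set E := Real.exp (-(2 * Real.sqrt s * x)) with hEdef
  have hE0 : 0 < E := Real.exp_pos _
  have hN : 0 < (1 + k) + (1 - k) * E := by positivity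
  have hM : 0 < (1 - k) + (1 + k) * E := by positivity
  have hu : HasDerivAt (fun y : ℝ => -(2 * Real.sqrt s * y)) (-(2 * Real.sqrt s)) x := by
    simpa using ((hasDerivAt_id x).const_mul (2 * Real.sqrt s)).fun_neg
  have hEd : HasDerivAt (fun y : ℝ => Real.exp (-(2 * Real.sqrt s * y)))
      (E * -(2 * Real.sqrt s)) x := (Real.hasDerivAt_exp _).comp x hu
  have hNd : HasDerivAt (fun y : ℝ => (1 + k) + (1 - k) * Real.exp (-(2 * Real.sqrt s * y)))
      ((1 - k) * (E * -(2 * Real.sqrt s))) x := (hEd.const_mul (1 - k)).const_add (1 + k)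
  have hMd : HasDerivAt (fun y : ℝ => (1 - k) + (1 + k) * Real.exp (-(2 * Real.sqrt s * y)))
      ((1 + k) * (E * -(2 * Real.sqrt s))) x := (hEd.const_mul (1 + k)).const_add (1 - k)
  have hlogN := (Real.hasDerivAt_log hN.ne').comp x hNd
  have hlogM := (Real.hasDerivAt_log hM.ne').comp x hMd
  have hfin := (hlogN.sub hlogM).const_mul (Real.sqrt 3 / 2)
  refine hfin.congr_deriv ?_; symm
  -- now the algebraic identity
  have hF : Real.exp (2 * Real.sqrt s * x) = E⁻¹ := by
    rw [hEdef, ← Real.exp_neg, neg_neg]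
  have hRHS : PP s x = 8 * s * E / (2 * E + aa s * (1 + E ^ 2)) := by
    have hDne : (0:ℝ) < 1 + aa s * ((E⁻¹ + E) / 2) := by positivity
    rw [PP, Real.cosh_eq, hF]
    rw [div_eq_div_iff hDne.ne' (by positivity : (0:ℝ) < 2 * E + aa s * (1 + E ^ 2)).ne']
    field_simp
    ring
  have hLHS : Real.sqrt 3 / 2 *
      (((1 + k) + (1 - k) * E)⁻¹ * ((1 - k) * (E * -(2 * Real.sqrt s))) -
        ((1 - k) + (1 + k) * E)⁻¹ * ((1 + k) * (E * -(2 * Real.sqrt s)))) =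
      4 * Real.sqrt 3 * Real.sqrt s * k * E /
        (((1 + k) + (1 - k) * E) * ((1 - k) + (1 + k) * E)) := by
    field_simp
    ring
  rw [hRHS, hLHS]
  rw [div_eq_div_iff (by positivity) (by positivity)]
  -- multiply by (1+a) and cancel
  have hane : (0:ℝ) < 1 + aa s := by linarith
  apply mul_left_cancel₀ hane.ne'
  have hR1 : Real.sqrt 3 * k * (1 + aa s) = 4 * Real.sqrt s := kk_rel hs3
  have hR2 : Real.sqrt s ^ 2 = s := Real.sq_sqrt hs.le
  have hkq : k ^ 2 * (1 + aa s) = 1 - aa s := kk_sq_rel hs hs3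
  linear_combination (-(4 * Real.sqrt s * E * (2 * E + aa s * (1 + E ^ 2)))) * hR1 +
    (-(16 * E * (2 * E + aa s * (1 + E ^ 2)))) * hR2 +
    (8 * s * E * (2 * E - 1 - E ^ 2)) * hkq

noncomputable def LL (s : ℝ) : ℝ :=
  Real.sqrt 3 / 2 * (Real.log (1 + kk s) - Real.log (1 - kk s))

lemma tendsto_GG_atTop {s : ℝ} (hs : 0 < s) (hs3 : s < 3 / 16) :
    Tendsto (GG s) atTop (𝓝 (LL s)) := by
  have hk0 := kk_pos hs hs3
  have hk1 := kk_lt_one hs hs3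
  have hr : (0:ℝ) < Real.sqrt s := Real.sqrt_pos.2 hs
  have h1 : Tendsto (fun x : ℝ => 2 * Real.sqrt s * x) atTop atTop :=
    Tendsto.const_mul_atTop (by positivity) tendsto_id
  have h2 : Tendsto (fun x : ℝ => -(2 * Real.sqrt s * x)) atTop atBot :=
    tendsto_neg_atTop_atBot.comp h1
  have hE : Tendsto (fun x : ℝ => Real.exp (-(2 * Real.sqrt s * x))) atTop (𝓝 0) :=
    Real.tendsto_exp_atBot.comp h2
  have hN : Tendsto (fun x : ℝ => (1 + kk s) + (1 - kk s) * Real.exp (-(2 * Real.sqrt s * x)))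
      atTop (𝓝 (1 + kk s)) := by
    have := (hE.const_mul (1 - kk s)).const_add (1 + kk s)
    simpa using this
  have hM : Tendsto (fun x : ℝ => (1 - kk s) + (1 + kk s) * Real.exp (-(2 * Real.sqrt s * x)))
      atTop (𝓝 (1 - kk s)) := by
    have := (hE.const_mul (1 + kk s)).const_add (1 - kk s)
    simpa using this
  have hlogN := ((Real.continuousAt_log (by linarith : (1:ℝ) + kk s ≠ 0)).tendsto).comp hN
  have hlogM := ((Real.continuousAt_log (by linarith : (1:ℝ) - kk s ≠ 0)).tendsto).comp hM
  exact ((hlogN.sub hlogM).const_mul (Real.sqrt 3 / 2))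

lemma GG_rep {s : ℝ} (hs : 0 < s) (hs3 : s < 3 / 16) (x : ℝ) :
    GG s x = Real.sqrt 3 / 2 *
      (Real.log ((1 + kk s) * Real.exp (2 * Real.sqrt s * x) + (1 - kk s)) -
        Real.log ((1 - kk s) * Real.exp (2 * Real.sqrt s * x) + (1 + kk s))) := by
  have hk0 := kk_pos hs hs3
  have hk1 := kk_lt_one hs hs3
  have hk1' : (0:ℝ) < 1 - kk s := by linarith
  have hk1'' : (0:ℝ) < 1 + kk s := by linarith
  have hE0 : 0 < Real.exp (-(2 * Real.sqrt s * x)) := Real.exp_pos _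
  have hF0 : 0 < Real.exp (2 * Real.sqrt s * x) := Real.exp_pos _
  have hFE : Real.exp (2 * Real.sqrt s * x) * Real.exp (-(2 * Real.sqrt s * x)) = 1 := by
    rw [← Real.exp_add]; simp
  have hN : (0:ℝ) < (1 + kk s) + (1 - kk s) * Real.exp (-(2 * Real.sqrt s * x)) := by positivity
  have hM : (0:ℝ) < (1 - kk s) + (1 + kk s) * Real.exp (-(2 * Real.sqrt s * x)) := by positivity
  have h1 : (1 + kk s) * Real.exp (2 * Real.sqrt s * x) + (1 - kk s) =
      Real.exp (2 * Real.sqrt s * x) *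
        ((1 + kk s) + (1 - kk s) * Real.exp (-(2 * Real.sqrt s * x))) := by
    linear_combination (-(1 - kk s)) * hFE
  have h2 : (1 - kk s) * Real.exp (2 * Real.sqrt s * x) + (1 + kk s) =
      Real.exp (2 * Real.sqrt s * x) *
        ((1 - kk s) + (1 + kk s) * Real.exp (-(2 * Real.sqrt s * x))) := by
    linear_combination (-(1 + kk s)) * hFE
  rw [GG, h1, h2, Real.log_mul hF0.ne' hN.ne', Real.log_mul hF0.ne' hM.ne']
  ring

lemma tendsto_GG_atBot {s : ℝ} (hs : 0 < s) (hs3 : s < 3 / 16) :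
    Tendsto (GG s) atBot (𝓝 (-LL s)) := by
  have hk0 := kk_pos hs hs3
  have hk1 := kk_lt_one hs hs3
  have hr : (0:ℝ) < Real.sqrt s := Real.sqrt_pos.2 hs
  have h1 : Tendsto (fun x : ℝ => 2 * Real.sqrt s * x) atBot atBot :=
    Tendsto.const_mul_atBot (by positivity) tendsto_id
  have hF : Tendsto (fun x : ℝ => Real.exp (2 * Real.sqrt s * x)) atBot (𝓝 0) :=
    Real.tendsto_exp_atBot.comp h1
  have hN : Tendsto (fun x : ℝ => (1 + kk s) * Real.exp (2 * Real.sqrt s * x) + (1 - kk s))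
      atBot (𝓝 (1 - kk s)) := by
    have := (hF.const_mul (1 + kk s)).add_const (1 - kk s)
    convert this using 2
    simp
  have hM : Tendsto (fun x : ℝ => (1 - kk s) * Real.exp (2 * Real.sqrt s * x) + (1 + kk s))
      atBot (𝓝 (1 + kk s)) := by
    have := (hF.const_mul (1 - kk s)).add_const (1 + kk s)
    convert this using 2
    simp
  have hlogN := ((Real.continuousAt_log (by linarith : (1:ℝ) - kk s ≠ 0)).tendsto).comp hN
  have hlogM := ((Real.continuousAt_log (by linarith : (1:ℝ) + kk s ≠ 0)).tendsto).comp hM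
  have := ((hlogN.sub hlogM).const_mul (Real.sqrt 3 / 2))
  have heq : ∀ x, GG s x = (fun x => Real.sqrt 3 / 2 *
      ((Real.log ∘ fun x => (1 + kk s) * Real.exp (2 * Real.sqrt s * x) + (1 - kk s)) x -
       (Real.log ∘ fun x => (1 - kk s) * Real.exp (2 * Real.sqrt s * x) + (1 + kk s)) x)) x :=
    fun x => GG_rep hs hs3 x
  rw [show -LL s = Real.sqrt 3 / 2 * (Real.log (1 - kk s) - Real.log (1 + kk s)) by
    rw [LL]; ring]
  exact Tendsto.congr (fun x => (heq x).symm) this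

lemma GG_zero {s : ℝ} : GG s 0 = 0 := by
  rw [GG]
  simp

lemma PP_nonneg {s : ℝ} (hs : 0 < s) (hs3 : s < 3 / 16) (x : ℝ) : 0 ≤ PP s x :=
  (PP_pos hs hs3 x).le

lemma PP_even {s : ℝ} (x : ℝ) : PP s (-x) = PP s x := by
  rw [PP, PP, mul_neg, Real.cosh_neg]

lemma integrableOn_PP_Ioi {s : ℝ} (hs : 0 < s) (hs3 : s < 3 / 16) :
    IntegrableOn (PP s) (Ioi 0) :=
  integrableOn_Ioi_deriv_of_nonneg' (fun x _ => hasDerivAt_GG hs hs3 x)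
    (fun x _ => PP_nonneg hs hs3 x) (tendsto_GG_atTop hs hs3)

lemma integrableOn_PP_Iic {s : ℝ} (hs : 0 < s) (hs3 : s < 3 / 16) :
    IntegrableOn (PP s) (Iic 0) := by
  rw [show (volume : Measure ℝ) = Measure.map Neg.neg volume from
    (Measure.map_neg_eq_self (volume : Measure ℝ)).symm]
  have m : MeasurableEmbedding fun x : ℝ => -x :=
    (Homeomorph.neg ℝ).measurableEmbedding
  rw [m.integrableOn_map_iff]
  have : IntegrableOn (fun x : ℝ => PP s (-x)) (Ici 0) := by
    apply (Iff.mpr integrableOn_Ici_iff_integrableOn_Ioi (integrableOn_PP_Ioi hs hs3)).congr_fun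
      (fun x _ => (PP_even x).symm) measurableSet_Ici
  simpa [Function.comp_def, neg_preimage, neg_Iic, neg_zero] using this

lemma integrable_PP {s : ℝ} (hs : 0 < s) (hs3 : s < 3 / 16) : Integrable (PP s) := by
  have := (integrableOn_PP_Iic hs hs3).union (integrableOn_PP_Ioi hs hs3)
  rwa [Iic_union_Ioi, integrableOn_univ] at this

lemma integral_PP {s : ℝ} (hs : 0 < s) (hs3 : s < 3 / 16) :
    ∫ x : ℝ, PP s x = Real.sqrt 3 * (Real.log (1 + kk s) - Real.log (1 - kk s)) := by
  have hIoi : ∫ x in Ioi (0:ℝ), PP s x = LL s - GG s 0 :=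
    integral_Ioi_of_hasDerivAt_of_nonneg' (fun x _ => hasDerivAt_GG hs hs3 x)
      (fun x _ => PP_nonneg hs hs3 x) (tendsto_GG_atTop hs hs3)
  have hIic : ∫ x in Iic (0:ℝ), PP s x = GG s 0 - (-LL s) :=
    integral_Iic_of_hasDerivAt_of_tendsto' (fun x _ => hasDerivAt_GG hs hs3 x)
      (integrableOn_PP_Iic hs hs3) (tendsto_GG_atBot hs hs3)
  rw [← intervalIntegral.integral_Iic_add_Ioi (integrableOn_PP_Iic hs hs3) (integrableOn_PP_Ioi hs hs3),
    hIoi, hIic, GG_zero, LL]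
  ring

noncomputable def del (ω : ℝ) : ℝ := Real.sqrt (ω / 2)
noncomputable def amn (ω : ℝ) : ℝ := Real.sqrt (1 - 16 * ((ω + 3 / 16) / 2) / 3)
noncomputable def KK (ω : ℝ) : ℝ :=
  2 / amn ω ^ 2 * (8 + 8 / (3 * amn ω) + 1 / del ω ^ 2)

lemma del_pos {ω : ℝ} (hw : 0 < ω) : 0 < del ω := Real.sqrt_pos.2 (by linarith)

lemma del_sq {ω : ℝ} (hw : 0 < ω) : del ω ^ 2 = ω / 2 := Real.sq_sqrt (by linarith)

lemma amn_pos {ω : ℝ} (hw : 0 < ω) (hw8 : ω ≤ 1 / 8) : 0 < amn ω :=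
  Real.sqrt_pos.2 (by nlinarith)

lemma amn_le_aa {ω s : ℝ} (hs2 : s ≤ (ω + 3 / 16) / 2) : amn ω ≤ aa s :=
  Real.sqrt_le_sqrt (by nlinarith)

set_option maxHeartbeats 2000000 in
lemma bound_PP' {ω : ℝ} (hw : 0 < ω) (hw8 : ω ≤ 1 / 8) {s : ℝ}
    (hs1 : ω / 2 < s) (hs2 : s < (ω + 3 / 16) / 2) (x : ℝ) :
    |PP' s x| ≤ KK ω * Real.exp (-(del ω * |x|)) := by
  have hs : 0 < s := by linarith
  have hs3 : s < 3 / 16 := by nlinarith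
  have hδ : 0 < del ω := del_pos hw
  have ham : 0 < amn ω := amn_pos hw hw8
  have hA1 : amn ω ≤ aa s := amn_le_aa hs2.le
  have hA2 : aa s ≤ 1 := aa_le_one hs
  have hApos : 0 < aa s := aa_pos hs3
  set u := 2 * Real.sqrt s * x with hu
  have hC1 : 1 ≤ Real.cosh u := Real.one_le_cosh u
  have hC0 : 0 < Real.cosh u := Real.cosh_pos (x := u)
  have hS : |Real.sinh u| ≤ Real.cosh u := by
    nlinarith [Real.cosh_sq_sub_sinh_sq u, sq_abs (Real.sinh u), abs_nonneg (Real.sinh u)]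
  have hδs : del ω ≤ Real.sqrt s := Real.sqrt_le_sqrt (by linarith)
  have hrs : 0 < Real.sqrt s := Real.sqrt_pos.2 hs
  -- exp bound on cosh
  have f5 : Real.exp (2 * del ω * |x|) ≤ 2 * Real.cosh u := by
    have habs1 : |2 * del ω * x| = 2 * del ω * |x| := by
      rw [abs_mul, abs_mul, abs_of_pos hδ, abs_of_nonneg (by norm_num : (0:ℝ) ≤ 2)]
    have habs2 : |2 * Real.sqrt s * x| = 2 * Real.sqrt s * |x| := by
      rw [abs_mul, abs_mul, abs_of_pos hrs, abs_of_nonneg (by norm_num : (0:ℝ) ≤ 2)]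
    have t1 : Real.cosh (2 * del ω * x) ≤ Real.cosh u := by
      rw [Real.cosh_le_cosh, hu, habs1, habs2]
      have := abs_nonneg x
      nlinarith
    have habs : 2 * del ω * |x| = |2 * del ω * x| := habs1.symm
    have t2 : Real.exp (2 * del ω * |x|) ≤ 2 * Real.cosh (2 * del ω * x) := by
      rw [habs, Real.cosh_eq]
      rcases abs_cases (2 * del ω * x) with ⟨h, _⟩ | ⟨h, _⟩ <;> rw [h] <;>
        nlinarith [Real.exp_pos (2 * del ω * x), Real.exp_pos (-(2 * del ω * x))]
    linarith
  set D := 1 + aa s * Real.cosh u with hD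
  have hDpos : 0 < D := D_pos hs3 x
  have hDlow : amn ω * Real.cosh u ≤ D := by nlinarith
  have hDhigh : D ≤ 2 * Real.cosh u := by nlinarith
  -- bound on |DD'|
  have hDD : |DD' s x| ≤ (8 / (3 * amn ω) + |x| / del ω) * Real.cosh u := by
    rw [DD']
    have e1 : |-8 / (3 * aa s) * Real.cosh u| = 8 / (3 * aa s) * Real.cosh u := by
      rw [abs_mul, abs_div, abs_of_pos hC0]
      congr 1
      rw [abs_of_pos (by positivity : (0:ℝ) < 3 * aa s)]
      norm_num
    have e2 : |aa s * (Real.sinh u * (x / Real.sqrt s))| ≤ Real.cosh u * (|x| / del ω) := by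
      rw [abs_mul, abs_mul, abs_div, abs_of_pos hrs, abs_of_pos hApos]
      have h1 : aa s * (|Real.sinh u| * (|x| / Real.sqrt s)) ≤
          1 * (Real.cosh u * (|x| / del ω)) := by
        apply mul_le_mul hA2
        · apply mul_le_mul hS
          · apply div_le_div_of_nonneg_left (abs_nonneg x) hδ hδs
          · positivity
          · exact hC0.le
        · positivity
        · norm_num
      linarith [h1]
    calc |-8 / (3 * aa s) * Real.cosh u + aa s * (Real.sinh u * (x / Real.sqrt s))|
        ≤ |-8 / (3 * aa s) * Real.cosh u| + |aa s * (Real.sinh u * (x / Real.sqrt s))| :=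
          abs_add_le _ _
      _ ≤ 8 / (3 * aa s) * Real.cosh u + Real.cosh u * (|x| / del ω) := by
          rw [e1]; linarith
      _ ≤ (8 / (3 * amn ω) + |x| / del ω) * Real.cosh u := by
          have : 8 / (3 * aa s) ≤ 8 / (3 * amn ω) := by
            apply div_le_div_of_nonneg_left (by norm_num) (by positivity)
            nlinarith
          nlinarith
  -- bound on |PP'|
  set Z := 8 / (3 * amn ω) + |x| / del ω with hZdef
  have hZ0 : 0 ≤ Z := by positivity
  have habs : |PP' s x| ≤ (4 * D + 4 * s * (Z * Real.cosh u)) / D ^ 2 := by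
    rw [PP', abs_div,
      abs_of_nonneg (sq_nonneg (1 + aa s * Real.cosh (2 * Real.sqrt s * x)))]
    apply div_le_div_of_nonneg_right ?_ (by positivity)
    calc |4 * (1 + aa s * Real.cosh (2 * Real.sqrt s * x)) - 4 * s * DD' s x|
        ≤ |4 * (1 + aa s * Real.cosh (2 * Real.sqrt s * x))| + |4 * s * DD' s x| :=
          abs_sub _ _
      _ ≤ 4 * D + 4 * s * (Z * Real.cosh u) := by
          have e3 : |4 * (1 + aa s * Real.cosh (2 * Real.sqrt s * x))| = 4 * D := by
            rw [abs_of_pos (by nlinarith : (0:ℝ) < 4 * (1 + aa s * Real.cosh (2 * Real.sqrt s * x)))]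
          have e4 : |4 * s * DD' s x| = 4 * s * |DD' s x| := by
            rw [abs_mul, abs_of_pos (by linarith : (0:ℝ) < 4 * s)]
          rw [e3, e4]
          have := mul_le_mul_of_nonneg_left hDD (by linarith : (0:ℝ) ≤ 4 * s)
          linarith
  refine habs.trans ?_
  rw [div_le_iff₀ (by positivity : (0:ℝ) < D ^ 2)]
  set W := 8 + 8 / (3 * amn ω) + 1 / del ω ^ 2 with hWdef
  have hW0 : 0 < W := by positivity
  have hKa : KK ω * amn ω ^ 2 = 2 * W := by
    rw [KK, ← hWdef]
    field_simp
  set C := Real.cosh u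
  set ei : ℝ := Real.exp (-(del ω * |x|)) with heidef
  have hei0 : 0 < ei := Real.exp_pos _
  have hexp1 : ei * Real.exp (2 * del ω * |x|) = Real.exp (del ω * |x|) := by
    rw [heidef, ← Real.exp_add]
    ring_nf
  have hexp2 : 1 + del ω * |x| ≤ Real.exp (del ω * |x|) := by
    have := Real.add_one_le_exp (del ω * |x|)
    linarith
  have stageA : 4 * D + 4 * s * (Z * C) ≤ 8 * C + Z * C := by
    have h4s : 4 * s ≤ 1 := by nlinarith
    nlinarith [mul_nonneg hZ0 hC0.le]
  have hid : (1 / del ω ^ 2) * (del ω * |x|) = |x| / del ω := by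
    field_simp
  have hWZ : 8 + Z ≤ W * (1 + del ω * |x|) := by
    have hdx0 : (0:ℝ) ≤ del ω * |x| := by positivity
    have ha2W : 1 / del ω ^ 2 ≤ W := by
      rw [hWdef]
      have : (0:ℝ) ≤ 8 / (3 * amn ω) := by positivity
      linarith
    have h3 : (1 / del ω ^ 2) * (del ω * |x|) ≤ W * (del ω * |x|) :=
      mul_le_mul_of_nonneg_right ha2W hdx0
    have hWge : 8 + 8 / (3 * amn ω) ≤ W := by
      rw [hWdef]
      have : (0:ℝ) ≤ 1 / del ω ^ 2 := by positivity
      linarith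
    have hmul : W * (1 + del ω * |x|) = W + W * (del ω * |x|) := by ring
    rw [hZdef, hmul]
    linarith [hid, h3, hWge]
  have stageB : 8 * C + Z * C ≤ (W * (1 + del ω * |x|)) * C := by
    have := mul_le_mul_of_nonneg_right hWZ hC0.le
    linarith
  have stageC : (W * (1 + del ω * |x|)) * C ≤ (W * Real.exp (del ω * |x|)) * C := by
    have := mul_le_mul_of_nonneg_left hexp2 hW0.le
    exact mul_le_mul_of_nonneg_right this hC0.le
  have stageD : (W * Real.exp (del ω * |x|)) * C =
      2 * W * ei * (Real.exp (2 * del ω * |x|) / 2 * C) := by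
    rw [← hexp1]
    ring
  have stageE : 2 * W * ei * (Real.exp (2 * del ω * |x|) / 2 * C) ≤ 2 * W * ei * (C * C) := by
    have hEC : Real.exp (2 * del ω * |x|) / 2 ≤ C := by linarith
    have := mul_le_mul_of_nonneg_right hEC hC0.le
    exact mul_le_mul_of_nonneg_left this (by positivity)
  have stageF : 2 * W * ei * (C * C) ≤ KK ω * ei * D ^ 2 := by
    have hKK0 : 0 < KK ω := by
      rw [KK]
      positivity
    have hsq : (amn ω * C) ^ 2 ≤ D ^ 2 := by
      have h0 : 0 ≤ amn ω * C := by positivity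
      nlinarith
    have h1 : KK ω * ei * (amn ω * C) ^ 2 ≤ KK ω * ei * D ^ 2 :=
      mul_le_mul_of_nonneg_left hsq (by positivity)
    have h2 : KK ω * ei * (amn ω * C) ^ 2 = 2 * W * ei * (C * C) := by
      rw [mul_pow]
      linear_combination (ei * C ^ 2) * hKa
    linarith
  calc 4 * D + 4 * s * (Z * C) ≤ 8 * C + Z * C := stageA
    _ ≤ (W * (1 + del ω * |x|)) * C := stageB
    _ ≤ (W * Real.exp (del ω * |x|)) * C := stageC
    _ = 2 * W * ei * (Real.exp (2 * del ω * |x|) / 2 * C) := stageD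
    _ ≤ 2 * W * ei * (C * C) := stageE
    _ ≤ KK ω * ei * D ^ 2 := stageF

lemma integrable_expabs {δ : ℝ} (hδ : 0 < δ) :
    Integrable (fun x : ℝ => Real.exp (-(δ * |x|))) := by
  have hIoi : IntegrableOn (fun x : ℝ => Real.exp (-(δ * |x|))) (Ioi 0) := by
    apply (exp_neg_integrableOn_Ioi 0 hδ).congr_fun ?_ measurableSet_Ioi
    intro x hx
    simp [abs_of_pos (show (0:ℝ) < x from hx)]
  have hIci : IntegrableOn (fun x : ℝ => Real.exp (-(δ * |x|))) (Ici 0) :=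
    Iff.mpr integrableOn_Ici_iff_integrableOn_Ioi hIoi
  have hIic : IntegrableOn (fun x : ℝ => Real.exp (-(δ * |x|))) (Iic 0) := by
    rw [show (volume : Measure ℝ) = Measure.map Neg.neg volume from
      (Measure.map_neg_eq_self (volume : Measure ℝ)).symm]
    have m : MeasurableEmbedding fun x : ℝ => -x :=
      (Homeomorph.neg ℝ).measurableEmbedding
    rw [m.integrableOn_map_iff]
    have : IntegrableOn (fun x : ℝ => Real.exp (-(δ * |(-x)|))) (Ici 0) := by
      simpa [abs_neg] using hIci
    simpa [Function.comp_def, neg_preimage, neg_Iic, neg_zero] using this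
  have := hIic.union hIoi
  rwa [Iic_union_Ioi, integrableOn_univ] at this

lemma continuous_PP {s : ℝ} (hs3 : s < 3 / 16) : Continuous (fun x => PP s x) := by
  apply Continuous.div continuous_const
  · fun_prop
  · exact fun x => (D_pos hs3 x).ne'

lemma continuous_PP' {s : ℝ} (hs3 : s < 3 / 16) : Continuous (fun x => PP' s x) := by
  unfold PP' DD'
  apply Continuous.div
  · fun_prop
  · fun_prop
  · exact fun x => pow_ne_zero 2 (D_pos hs3 x).ne'

lemma hasDerivAt_integral {ω : ℝ} (hw : 0 < ω) (hw8 : ω ≤ 1 / 8) :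
    HasDerivAt (fun s => ∫ x : ℝ, PP s x) (∫ x : ℝ, PP' ω x) ω := by
  have hw3 : ω < 3 / 16 := by linarith
  set ε := min (ω / 2) ((3 / 16 - ω) / 2) with hεdef
  have hε : 0 < ε := by
    apply lt_min (by linarith) (by linarith)
  have hball : ∀ s ∈ Metric.ball ω ε, ω / 2 < s ∧ s < (ω + 3 / 16) / 2 := by
    intro s hs
    rw [Metric.mem_ball, Real.dist_eq, abs_lt] at hs
    constructor
    · have := min_le_left (ω / 2) ((3 / 16 - ω) / 2)
      linarith [hs.1]
    · have := min_le_right (ω / 2) ((3 / 16 - ω) / 2)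
      linarith [hs.2]
  have hmain := hasDerivAt_integral_of_dominated_loc_of_deriv_le
    (F := fun s x => PP s x) (F' := fun s x => PP' s x)
    (bound := fun x => KK ω * Real.exp (-(del ω * |x|)))
    (x₀ := ω) (μ := volume) (Metric.ball_mem_nhds ω hε)
    ?_ ?_ ?_ ?_ ?_ ?_
  · exact hmain.2
  · filter_upwards [Metric.ball_mem_nhds ω hε] with s hs
    obtain ⟨h1, h2⟩ := hball s hs
    exact ((continuous_PP (by nlinarith)).aestronglyMeasurable)
  · exact integrable_PP hw hw3
  · exact (continuous_PP' hw3).aestronglyMeasurable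
  · apply ae_of_all
    intro x s hs
    obtain ⟨h1, h2⟩ := hball s hs
    rw [Real.norm_eq_abs]
    exact bound_PP' hw hw8 h1 h2 x
  · exact (integrable_expabs (del_pos hw)).const_mul _
  · apply ae_of_all
    intro x s hs
    obtain ⟨h1, h2⟩ := hball s hs
    exact hasDerivAt_PP (by linarith) (by nlinarith) x

lemma hasDerivAt_closed {ω : ℝ} (hw : 0 < ω) (hw3 : ω < 3 / 16) :
    HasDerivAt (fun s => Real.sqrt 3 * (Real.log (1 + kk s) - Real.log (1 - kk s)))
      (2 / (aa ω ^ 2 * Real.sqrt ω)) ω := by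
  have ha := aa_pos hw3
  have hu : (0:ℝ) < Real.sqrt ω := Real.sqrt_pos.2 hw
  have hb : (0:ℝ) < Real.sqrt 3 := by positivity
  have h3 : Real.sqrt 3 ^ 2 = 3 := Real.sq_sqrt (by norm_num)
  have hss : Real.sqrt ω ^ 2 = ω := Real.sq_sqrt hw.le
  have hsq := aa_sq hw3
  have hk0 := kk_pos hw hw3
  have hk1 := kk_lt_one hw hw3
  have hkq := kk_sq_rel hw hw3
  have hnum : HasDerivAt (fun s : ℝ => 4 * Real.sqrt s) (4 * (1 / (2 * Real.sqrt ω))) ω :=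
    (Real.hasDerivAt_sqrt hw.ne').const_mul 4
  have hden : HasDerivAt (fun s : ℝ => Real.sqrt 3 * (1 + aa s))
      (Real.sqrt 3 * (-8 / (3 * aa ω))) ω :=
    ((hasDerivAt_aa hw3).const_add 1).const_mul (Real.sqrt 3)
  have hdenne : Real.sqrt 3 * (1 + aa ω) ≠ 0 := by positivity
  have hkd : HasDerivAt kk
      ((4 * (1 / (2 * Real.sqrt ω)) * (Real.sqrt 3 * (1 + aa ω)) -
        4 * Real.sqrt ω * (Real.sqrt 3 * (-8 / (3 * aa ω)))) /
        (Real.sqrt 3 * (1 + aa ω)) ^ 2) ω := hnum.div hden hdenne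
  have hKds : (4 * (1 / (2 * Real.sqrt ω)) * (Real.sqrt 3 * (1 + aa ω)) -
        4 * Real.sqrt ω * (Real.sqrt 3 * (-8 / (3 * aa ω)))) /
        (Real.sqrt 3 * (1 + aa ω)) ^ 2 =
      2 * Real.sqrt 3 / (3 * aa ω * Real.sqrt ω * (1 + aa ω)) := by
    rw [div_eq_div_iff (by positivity) (by positivity)]
    field_simp
    linear_combination 12 * hsq + 64 * hss - 4 * (1 + aa ω) * h3
  rw [hKds] at hkd
  have hlog1 : HasDerivAt (fun s => Real.log (1 + kk s))
      ((1 + kk ω)⁻¹ * (2 * Real.sqrt 3 / (3 * aa ω * Real.sqrt ω * (1 + aa ω)))) ω :=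
    (Real.hasDerivAt_log (by linarith)).comp ω (hkd.const_add 1)
  have hlog2 : HasDerivAt (fun s => Real.log (1 - kk s))
      ((1 - kk ω)⁻¹ * -(2 * Real.sqrt 3 / (3 * aa ω * Real.sqrt ω * (1 + aa ω)))) ω :=
    (Real.hasDerivAt_log (by linarith)).comp ω (hkd.const_sub 1)
  have hfin := (hlog1.sub hlog2).const_mul (Real.sqrt 3)
  refine hfin.congr_deriv ?_; symm
  have h1k : (0:ℝ) < 1 - kk ω := by linarith
  have h1k' : (0:ℝ) < 1 + kk ω := by linarith
  field_simp
  linear_combination (-3) * hkq - 2 * aa ω * h3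

theorem stmt_3 :
    ∃ c : ℝ, 0 < c ∧
      ∀ ω ∈ Set.Ioc (0 : ℝ) (1 / 8),
        c * Real.sqrt ω ≤ ∫ x : ℝ, phi ω x * Lam ω x := by
  refine ⟨1, one_pos, ?_⟩
  rintro ω ⟨hw, hw8⟩
  have hw3 : ω < 3 / 16 := by linarith
  have ha := aa_pos hw3
  have ha1 := aa_le_one hw
  have hu : (0:ℝ) < Real.sqrt ω := Real.sqrt_pos.2 hw
  have hss : Real.sqrt ω ^ 2 = ω := Real.sq_sqrt hw.le
  have hev : (fun s => ∫ x : ℝ, PP s x) =ᶠ[𝓝 ω]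
      (fun s => Real.sqrt 3 * (Real.log (1 + kk s) - Real.log (1 - kk s))) := by
    filter_upwards [Ioo_mem_nhds hw hw3] with s hs
    exact integral_PP hs.1 hs.2
  have h1 : HasDerivAt (fun s => ∫ x : ℝ, PP s x) (2 / (aa ω ^ 2 * Real.sqrt ω)) ω :=
    (hasDerivAt_closed hw hw3).congr_of_eventuallyEq hev
  have h2 := hasDerivAt_integral hw hw8
  have hval : ∫ x : ℝ, PP' ω x = 2 / (aa ω ^ 2 * Real.sqrt ω) := h2.unique h1
  have hpt : ∀ x : ℝ, phi ω x * Lam ω x = ω / 2 * PP' ω x := phi_mul_Lam hw hw3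
  have hI : ∫ x : ℝ, phi ω x * Lam ω x = Real.sqrt ω / aa ω ^ 2 := by
    simp only [hpt]
    rw [MeasureTheory.integral_const_mul, hval]
    field_simp
    linear_combination (-1 : ℝ) * hss
  rw [hI, one_mul, le_div_iff₀ (by positivity : (0:ℝ) < aa ω ^ 2)]
  have haa2 : aa ω ^ 2 ≤ 1 := by nlinarith
  nlinarith [mul_le_mul_of_nonneg_left haa2 hu.le]
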